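/- (Scalar CDARE, trichotomy of the multipliers) Let a > 0, g > 0, h ∈ ℝ, D := (1 − a² − g·h)² + 4·g·h, h_M := −(1−a)²/g, h_m := −(1+a)²/g, and for D ≥ 0 let x_M, x_m be the larger and smaller roots of g·x² + (1 − a² − g·h)·x − h = 0 and t̂_x := a²/(1+gx)². Then: if h > h_M then t̂_{x_M} < 1 < t̂_{x_m}; if h = h_M or h = h_m then t̂_{x_M} = t̂_{x_m} = 1; if h < h_m then t̂_{x_M} > 1 > t̂_{x_m}. -/

import Mathlib

set_option maxHeartbeats 1000000 in
/-- Scalar CDARE, trichotomy of the multipliers. -/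
theorem scalar_cdare_multiplier_trichotomy (a g h : ℝ) (ha : 0 < a) (hg : 0 < g) :
    let D : ℝ := (1 - a ^ 2 - g * h) ^ 2 + 4 * g * h
    let hM : ℝ := -(1 - a) ^ 2 / g
    let hm : ℝ := -(1 + a) ^ 2 / g
    let xM : ℝ := (-(1 - a ^ 2 - g * h) + Real.sqrt D) / (2 * g)
    let xm : ℝ := (-(1 - a ^ 2 - g * h) - Real.sqrt D) / (2 * g)
    let tM : ℝ := a ^ 2 / (1 + g * xM) ^ 2
    let tm : ℝ := a ^ 2 / (1 + g * xm) ^ 2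
    (h > hM → tM < 1 ∧ 1 < tm) ∧
    ((h = hM ∨ h = hm) → tM = 1 ∧ tm = 1) ∧
    (h < hm → tM > 1 ∧ 1 > tm) := by
  intro D hM hm xM xm tM tm
  have hg' : g ≠ 0 := ne_of_gt hg
  have ha' : a ≠ 0 := ne_of_gt ha
  have hD : D = (1 + a ^ 2 + g * h) ^ 2 - 4 * a ^ 2 := by simp only [D]; ring
  have hq1 : 1 + g * xM = (1 + a ^ 2 + g * h + Real.sqrt D) / 2 := by
    simp only [xM]; field_simp; ring
  have hq2 : 1 + g * xm = (1 + a ^ 2 + g * h - Real.sqrt D) / 2 := by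
    simp only [xm]; field_simp; ring
  have hs0 : 0 ≤ Real.sqrt D := Real.sqrt_nonneg D
  refine ⟨?_, ?_, ?_⟩
  · intro hh
    have h1 : 0 < (1 - a) ^ 2 + g * h := by
      have := (div_lt_iff₀ hg).mp hh
      linarith [this, mul_comm h g]
    have hDpos : 0 < D := by
      rw [hD]
      nlinarith [mul_pos h1 (show (0:ℝ) < (1-a)^2 + g*h + 4*a by nlinarith)]
    have hsq : Real.sqrt D ^ 2 = D := Real.sq_sqrt hDpos.le
    have hlt : Real.sqrt D < 1 + a ^ 2 + g * h := by
      nlinarith [hsq, hs0, hD, h1, ha, sq_nonneg a]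
    have hgt : 1 + a ^ 2 + g * h - 2 * a < Real.sqrt D := by
      nlinarith [hsq, hs0, hD, h1, ha]
    have hqMa : a < 1 + g * xM := by rw [hq1]; linarith
    have hqm1 : 0 < 1 + g * xm := by rw [hq2]; linarith
    have hqm2 : 1 + g * xm < a := by rw [hq2]; linarith
    constructor
    · show a ^ 2 / (1 + g * xM) ^ 2 < 1
      rw [div_lt_one (by nlinarith : (0:ℝ) < (1 + g * xM) ^ 2)]
      nlinarith
    · show 1 < a ^ 2 / (1 + g * xm) ^ 2
      rw [one_lt_div (pow_pos hqm1 2)]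
      nlinarith
  · rintro (hh | hh)
    · have hgh : g * h = -(1 - a) ^ 2 := by rw [hh]; simp only [hM]; field_simp
      have hD0 : D = 0 := by
        rw [hD, hgh]; ring
      have hsD : Real.sqrt D = 0 := by rw [hD0, Real.sqrt_zero]
      have e1 : 1 + g * xM = a := by rw [hq1, hsD]; linarith [hgh]
      have e2 : 1 + g * xm = a := by rw [hq2, hsD]; linarith [hgh]
      constructor
      · show a ^ 2 / (1 + g * xM) ^ 2 = 1
        rw [e1, div_self (pow_ne_zero 2 ha')]
      · show a ^ 2 / (1 + g * xm) ^ 2 = 1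
        rw [e2, div_self (pow_ne_zero 2 ha')]
    · have hgh : g * h = -(1 + a) ^ 2 := by rw [hh]; simp only [hm]; field_simp
      have hD0 : D = 0 := by
        rw [hD, hgh]; ring
      have hsD : Real.sqrt D = 0 := by rw [hD0, Real.sqrt_zero]
      have e1 : 1 + g * xM = -a := by rw [hq1, hsD]; linarith [hgh]
      have e2 : 1 + g * xm = -a := by rw [hq2, hsD]; linarith [hgh]
      have hna : (-a) ^ 2 = a ^ 2 := by ring
      constructor
      · show a ^ 2 / (1 + g * xM) ^ 2 = 1
        rw [e1, hna, div_self (pow_ne_zero 2 ha')]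
      · show a ^ 2 / (1 + g * xm) ^ 2 = 1
        rw [e2, hna, div_self (pow_ne_zero 2 ha')]
  · intro hh
    have h2 : (1 + a) ^ 2 + g * h < 0 := by
      have := (lt_div_iff₀ hg).mp hh
      linarith [this, mul_comm h g]
    have hDpos : 0 < D := by
      rw [hD]
      nlinarith [mul_pos_of_neg_of_neg (show (1+a)^2 + g*h - 4*a < 0 by linarith) h2]
    have hsq : Real.sqrt D ^ 2 = D := Real.sq_sqrt hDpos.le
    have hlt : Real.sqrt D < -(1 + a ^ 2 + g * h) := by
      nlinarith [hsq, hs0, hD, h2, ha]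
    have hgt : -(1 + a ^ 2 + g * h) - 2 * a < Real.sqrt D := by
      nlinarith [hsq, hs0, hD, h2, ha]
    have hqM1 : 1 + g * xM < 0 := by rw [hq1]; linarith
    have hqM2 : -a < 1 + g * xM := by rw [hq1]; linarith
    have hqm1 : 1 + g * xm < -a := by rw [hq2]; linarith
    constructor
    · show 1 < a ^ 2 / (1 + g * xM) ^ 2
      rw [one_lt_div (by nlinarith : (0:ℝ) < (1 + g * xM) ^ 2)]
      nlinarith
    · show a ^ 2 / (1 + g * xm) ^ 2 < 1
      rw [div_lt_one (by nlinarith : (0:ℝ) < (1 + g * xm) ^ 2)]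
      nlinarith
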